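/- For any extension ILX of IL: if Γ ≺_S Δ and S ⊢_ILX φ, then Γ ≺_{S∪{φ}} Δ. Moreover, if Γ ≺_S Δ then Γ ≺_{S ∪ □S} Δ, where □S = {□A : A ∈ S}. -/

import Mathlib

inductive ILForm : Type
  | bot : ILForm
  | var : ℕ → ILForm
  | imp : ILForm → ILForm → ILForm
  | box : ILForm → ILForm
  | rhd : ILForm → ILForm → ILForm
  deriving DecidableEq

namespace ILForm

def neg (A : ILForm) : ILForm := A.imp ILForm.bot
def or (A B : ILForm) : ILForm := A.neg.imp B
def and (A B : ILForm) : ILForm := (A.imp B.neg).neg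
def dia (A : ILForm) : ILForm := A.neg.box.neg

end ILForm

/-- A Boolean valuation: respects `⊥` and `→`, arbitrary on variables, boxes and `▷`. -/
def IsBoolVal (v : ILForm → Bool) : Prop :=
  v ILForm.bot = false ∧ ∀ A B : ILForm, v (A.imp B) = (!(v A) || v B)

/-- Classical tautologies in the modal language. -/
def ILTaut (A : ILForm) : Prop := ∀ v, IsBoolVal v → v A = true

/-- Provability in the interpretability logic IL. -/
inductive ILProv : ILForm → Prop
  | taut {A : ILForm} : ILTaut A → ILProv A
  | K {A B : ILForm} : ILProv (((A.imp B).box).imp ((A.box).imp (B.box)))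
  | L {A : ILForm} : ILProv ((((A.box).imp A).box).imp (A.box))
  | J1 {A B : ILForm} : ILProv (((A.imp B).box).imp (A.rhd B))
  | J2 {A B C : ILForm} : ILProv (((A.rhd B).and (B.rhd C)).imp (A.rhd C))
  | J3 {A B C : ILForm} : ILProv (((A.rhd C).and (B.rhd C)).imp ((A.or B).rhd C))
  | J4 {A B : ILForm} : ILProv ((A.rhd B).imp ((A.dia).imp (B.dia)))
  | J5 {A : ILForm} : ILProv ((A.dia).rhd A)
  | mp {A B : ILForm} : ILProv (A.imp B) → ILProv A → ILProv B
  | nec {A : ILForm} : ILProv A → ILProv (A.box)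

/-- An extension of IL: contains all IL theorems, closed under modus ponens and necessitation. -/
structure ILExtension (P : ILForm → Prop) : Prop where
  il : ∀ {A}, ILProv A → P A
  mp : ∀ {A B}, P (A.imp B) → P A → P B
  nec : ∀ {A}, P A → P (A.box)

/-- Derivability from a set of assumptions in the logic `P`. -/
inductive Deriv (P : ILForm → Prop) (S : Set ILForm) : ILForm → Prop
  | thm {A : ILForm} : P A → Deriv P S A
  | mem {A : ILForm} : A ∈ S → Deriv P S A
  | mp {A B : ILForm} : Deriv P S (A.imp B) → Deriv P S A → Deriv P S B

def ILConsistent (P : ILForm → Prop) (S : Set ILForm) : Prop := ¬ Deriv P S ILForm.bot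

/-- Maximal consistent set w.r.t. the logic `P`. -/
def ILMCS (P : ILForm → Prop) (S : Set ILForm) : Prop :=
  ILConsistent P S ∧ ∀ T : Set ILForm, S ⊂ T → ¬ ILConsistent P T

/-- Finite disjunction; the empty disjunction is `⊥`. -/
def bigOr : List ILForm → ILForm
  | [] => ILForm.bot
  | A :: l => A.or (bigOr l)

/-- `Assuring Γ Δ S` ("Γ ≺_S Δ"): Δ is an S-assuring successor of Γ. -/
def Assuring (Γ Δ : Set ILForm) (S : Set ILForm) : Prop :=
  ∀ (A : ILForm) (L : List ILForm), (∀ B ∈ L, B ∈ S) →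
    (A.neg.rhd (bigOr (L.map ILForm.neg))) ∈ Γ → A ∈ Δ ∧ A.box ∈ Δ

/-- `Succ Γ Δ` ("Γ ≺ Δ"): whenever □A ∈ Γ, both A and □A are in Δ. -/
def Succ (Γ Δ : Set ILForm) : Prop :=
  ∀ A : ILForm, A.box ∈ Γ → A ∈ Δ ∧ A.box ∈ Δ


section Aux

open ILForm

variable {P : ILForm → Prop}

-- valuation lemmas
lemma val_bot {v} (hv : IsBoolVal v) : v ILForm.bot = false := hv.1
lemma val_imp {v} (hv : IsBoolVal v) (A B) : v (A.imp B) = (!(v A) || v B) := hv.2 A B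
lemma val_neg {v} (hv : IsBoolVal v) (A) : v A.neg = !(v A) := by
  simp [ILForm.neg, val_imp hv, val_bot hv]
lemma val_or {v} (hv : IsBoolVal v) (A B) : v (A.or B) = (v A || v B) := by
  simp [ILForm.or, val_imp hv, val_neg hv]
lemma val_and {v} (hv : IsBoolVal v) (A B) : v (A.and B) = (v A && v B) := by
  simp only [ILForm.and, val_neg hv, val_imp hv]
  cases v A <;> cases v B <;> rfl
lemma val_bigOr {v} (hv : IsBoolVal v) (l : List ILForm) : v (bigOr l) = l.any v := by
  induction l with
  | nil => simp [bigOr, val_bot hv]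
  | cons A l ih => simp [bigOr, val_or hv, ih]

def impList : List ILForm → ILForm → ILForm
  | [], φ => φ
  | B :: M, φ => B.imp (impList M φ)

lemma val_impList {v} (hv : IsBoolVal v) (M : List ILForm) (φ : ILForm) :
    v (impList M φ) = (M.any (fun B => !(v B)) || v φ) := by
  induction M with
  | nil => simp [impList]
  | cons B M ih => simp [impList, val_imp hv, ih, Bool.or_assoc]

-- basic provability lemmas
lemma prov_taut (hP : ILExtension P) {A : ILForm} (h : ILTaut A) : P A :=
  hP.il (ILProv.taut h)

lemma prov_and_intro (hP : ILExtension P) {A B : ILForm} (hA : P A) (hB : P B) :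
    P (A.and B) := by
  have ht : ILTaut (A.imp (B.imp (A.and B))) := by
    intro v hv
    simp only [val_imp hv, val_and hv]
    cases v A <;> cases v B <;> rfl
  exact hP.mp (hP.mp (prov_taut hP ht) hA) hB

lemma prov_imp_rhd (hP : ILExtension P) {A B : ILForm} (h : P (A.imp B)) : P (A.rhd B) :=
  hP.mp (hP.il ILProv.J1) (hP.nec h)

lemma prov_rhd_trans (hP : ILExtension P) {A B C : ILForm}
    (h1 : P (A.rhd B)) (h2 : P (B.rhd C)) : P (A.rhd C) :=
  hP.mp (hP.il ILProv.J2) (prov_and_intro hP h1 h2)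

lemma prov_rhd_or (hP : ILExtension P) {A B C : ILForm}
    (h1 : P (A.rhd C)) (h2 : P (B.rhd C)) : P ((A.or B).rhd C) :=
  hP.mp (hP.il ILProv.J3) (prov_and_intro hP h1 h2)

lemma prov_negbox_rhd_neg (hP : ILExtension P) (C : ILForm) :
    P ((C.box.neg).rhd C.neg) := by
  have h1 : P ((C.neg.neg).imp C) := prov_taut hP (by
    intro v hv; simp [val_imp hv, val_neg hv])
  have h2 : P ((C.neg.neg.box).imp C.box) := hP.mp (hP.il ILProv.K) (hP.nec h1)
  have h3 : ILTaut (((C.neg.neg.box).imp C.box).imp ((C.box.neg).imp (C.neg.neg.box.neg))) := by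
    intro v hv
    simp only [val_imp hv, val_neg hv]
    cases v (C.neg.neg.box) <;> cases v (C.box) <;> rfl
  have h4 : P ((C.box.neg).imp (C.neg.dia)) := hP.mp (prov_taut hP h3) h2
  exact prov_rhd_trans hP (prov_imp_rhd hP h4) (hP.il (ILProv.J5 (A := C.neg)))

-- derivability / MCS lemmas
lemma deriv_cut {S : Set ILForm} {A B : ILForm}
    (h : Deriv P (S ∪ {A}) B) (hA : Deriv P S A) : Deriv P S B := by
  induction h with
  | thm h => exact Deriv.thm h
  | mem h =>
    rcases h with h | h
    · exact Deriv.mem h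
    · rcases h; exact hA
  | mp _ _ ih1 ih2 => exact Deriv.mp ih1 ih2

lemma mcs_deriv {Γ : Set ILForm} (hΓ : ILMCS P Γ) {A : ILForm}
    (h : Deriv P Γ A) : A ∈ Γ := by
  by_contra hA
  have hsub : Γ ⊂ Γ ∪ {A} := by
    constructor
    · exact Set.subset_union_left
    · intro hc
      exact hA (hc (Set.mem_union_right _ rfl))
  have := hΓ.2 _ hsub
  rw [ILConsistent, not_not] at this
  exact hΓ.1 (deriv_cut this h)

lemma mcs_rhd_trans (hP : ILExtension P) {Γ : Set ILForm} (hΓ : ILMCS P Γ)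
    {X Y Z : ILForm} (h1 : (X.rhd Y) ∈ Γ) (h2 : P (Y.rhd Z)) : (X.rhd Z) ∈ Γ := by
  apply mcs_deriv hΓ
  have ht : ILTaut ((X.rhd Y).imp ((Y.rhd Z).imp ((X.rhd Y).and (Y.rhd Z)))) := by
    intro v hv
    simp only [val_imp hv, val_and hv]
    cases v (X.rhd Y) <;> cases v (Y.rhd Z) <;> rfl
  have hand : Deriv P Γ ((X.rhd Y).and (Y.rhd Z)) :=
    Deriv.mp (Deriv.mp (Deriv.thm (prov_taut hP ht)) (Deriv.mem h1)) (Deriv.thm h2)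
  exact Deriv.mp (Deriv.thm (hP.il ILProv.J2)) hand

-- derivation ⇒ finite implication
lemma deriv_impList (hP : ILExtension P) {S : Set ILForm} {φ : ILForm}
    (h : Deriv P S φ) : ∃ M : List ILForm, (∀ B ∈ M, B ∈ S) ∧ P (impList M φ) := by
  induction h with
  | thm h => exact ⟨[], by simp, h⟩
  | mem h =>
    refine ⟨[_], by simpa, prov_taut hP ?_⟩
    intro v hv
    simp only [impList, val_imp hv]
    cases v _ <;> rfl
  | @mp A B _ _ ih1 ih2 =>
    obtain ⟨M1, hM1, h1⟩ := ih1
    obtain ⟨M2, hM2, h2⟩ := ih2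
    refine ⟨M1 ++ M2, ?_, ?_⟩
    · intro B hB
      rcases List.mem_append.1 hB with h | h
      · exact hM1 _ h
      · exact hM2 _ h
    · have ht : ILTaut ((impList M1 (A.imp B)).imp ((impList M2 A).imp (impList (M1 ++ M2) B))) := by
        intro v hv
        simp only [val_imp hv, val_impList hv, List.any_append]
        have : ∀ a1 a2 x y : Bool,
            (!(a1 || (!x || y)) || (!(a2 || x) || (a1 || a2 || y))) = true := by decide
        exact this _ _ _ _
      exact hP.mp (hP.mp (prov_taut hP ht) h1) h2

-- part 1 core
lemma part1_core (hP : ILExtension P) {S : Set ILForm} {φ : ILForm}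
    (M : List ILForm) (L : List ILForm) (hL : ∀ B ∈ L, B ∈ S ∨ B = φ) :
    ∃ L' : List ILForm, (∀ B ∈ L', B ∈ S ∨ B ∈ M) ∧
      ILTaut ((impList M φ).imp ((bigOr (L.map ILForm.neg)).imp (bigOr (L'.map ILForm.neg)))) := by
  induction L with
  | nil =>
    refine ⟨[], by simp, ?_⟩
    intro v hv
    simp [val_imp hv, val_bigOr hv, bigOr, val_bot hv]
  | cons B L ih =>
    obtain ⟨L', hL', ht⟩ := ih (fun C hC => hL C (List.mem_cons_of_mem _ hC))
    rcases hL B List.mem_cons_self with hB | hB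
    · refine ⟨B :: L', ?_, ?_⟩
      · intro C hC
        rcases List.mem_cons.1 hC with rfl | hC
        · exact Or.inl hB
        · exact hL' _ hC
      · intro v hv
        have h0 := ht v hv
        simp only [val_imp hv, val_bigOr hv, List.map_cons, List.any_cons, val_neg hv] at h0 ⊢
        revert h0
        have : ∀ i b dl dl' : Bool,
            ((!i || (!dl || dl')) = true) →
            ((!i || (!(!b || dl) || (!b || dl'))) = true) := by decide
        exact this _ _ _ _
    · subst hB
      refine ⟨M ++ L', ?_, ?_⟩
      · intro C hC
        rcases List.mem_append.1 hC with h | h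
        · exact Or.inr h
        · exact hL' _ h
      · intro v hv
        have h0 := ht v hv
        have hcomp : (v ∘ ILForm.neg) = fun B => !(v B) := funext fun B => val_neg hv B
        simp only [val_imp hv, val_bigOr hv, List.map_cons, List.any_cons, List.map_append,
          List.any_append, val_neg hv, val_impList hv, List.any_map, hcomp] at h0 ⊢
        revert h0
        have : ∀ m p dl dl' : Bool,
            ((!(m || p) || (!dl || dl')) = true) →
            ((!(m || p) || (!(!p || dl) || (m || dl'))) = true) := by decide
        exact this _ _ _ _

-- part 2 core
lemma part2_core (hP : ILExtension P) {S : Set ILForm}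
    (L : List ILForm) (hL : ∀ B ∈ L, B ∈ S ∨ ∃ A ∈ S, B = A.box) :
    ∃ L' : List ILForm, (∀ B ∈ L', B ∈ S) ∧
      P ((bigOr (L.map ILForm.neg)).rhd (bigOr (L'.map ILForm.neg))) := by
  induction L with
  | nil =>
    refine ⟨[], by simp, prov_imp_rhd hP (prov_taut hP ?_)⟩
    intro v hv
    simp [bigOr, val_imp hv, val_bot hv]
  | cons B L ih =>
    obtain ⟨L', hL', hprov⟩ := ih (fun C hC => hL C (List.mem_cons_of_mem _ hC))
    have tail_rhd : ∀ X : ILForm,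
        P ((bigOr (L.map ILForm.neg)).rhd (X.or (bigOr (L'.map ILForm.neg)))) := by
      intro X
      refine prov_rhd_trans hP hprov (prov_imp_rhd hP (prov_taut hP ?_))
      intro v hv
      simp only [val_imp hv, val_or hv]
      cases v (bigOr (L'.map ILForm.neg)) <;> cases v X <;> rfl
    rcases hL B List.mem_cons_self with hB | ⟨C, hC, rfl⟩
    · refine ⟨B :: L', ?_, ?_⟩
      · intro D hD
        rcases List.mem_cons.1 hD with rfl | hD
        · exact hB
        · exact hL' _ hD
      · simp only [List.map_cons, bigOr]
        refine prov_rhd_or hP (prov_imp_rhd hP (prov_taut hP ?_)) (tail_rhd _)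
        intro v hv
        simp only [val_imp hv, val_or hv]
        cases v B.neg <;> cases v (bigOr (L'.map ILForm.neg)) <;> rfl
    · refine ⟨C :: L', ?_, ?_⟩
      · intro D hD
        rcases List.mem_cons.1 hD with rfl | hD
        · exact hC
        · exact hL' _ hD
      · simp only [List.map_cons, bigOr]
        refine prov_rhd_or hP ?_ (tail_rhd _)
        refine prov_rhd_trans hP (prov_negbox_rhd_neg hP C)
          (prov_imp_rhd hP (prov_taut hP ?_))
        intro v hv
        simp only [val_imp hv, val_or hv]
        cases v C.neg <;> cases v (bigOr (L'.map ILForm.neg)) <;> rfl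

end Aux

/-- Labels may be closed under ILX-consequence and under necessitation. -/
theorem assuring_extend_consequence_and_nec (P : ILForm → Prop) (hP : ILExtension P)
    (Γ Δ : Set ILForm) (hΓ : ILMCS P Γ) (hΔ : ILMCS P Δ) (S : Set ILForm) :
    (∀ φ : ILForm, Assuring Γ Δ S → Deriv P S φ → Assuring Γ Δ (S ∪ {φ})) ∧
    (Assuring Γ Δ S → Assuring Γ Δ (S ∪ {X | ∃ A ∈ S, X = ILForm.box A})) := by
  constructor
  · intro φ hAss hDer A L hL hmem
    obtain ⟨M, hM, hPM⟩ := deriv_impList hP hDer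
    have hL' : ∀ B ∈ L, B ∈ S ∨ B = φ := by
      intro B hB
      rcases hL B hB with h | h
      · exact Or.inl h
      · exact Or.inr h
    obtain ⟨L', hmemL', ht⟩ := part1_core hP M L hL'
    have himp : P ((bigOr (L.map ILForm.neg)).imp (bigOr (L'.map ILForm.neg))) :=
      hP.mp (prov_taut hP ht) hPM
    have hrhd : (A.neg.rhd (bigOr (L'.map ILForm.neg))) ∈ Γ :=
      mcs_rhd_trans hP hΓ hmem (prov_imp_rhd hP himp)
    refine hAss A L' ?_ hrhd
    intro B hB
    rcases hmemL' B hB with h | h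
    · exact h
    · exact hM B h
  · intro hAss A L hL hmem
    have hL' : ∀ B ∈ L, B ∈ S ∨ ∃ C ∈ S, B = C.box := by
      intro B hB
      rcases hL B hB with h | h
      · exact Or.inl h
      · exact Or.inr h
    obtain ⟨L', hmemL', hprov⟩ := part2_core hP L hL'
    have hrhd : (A.neg.rhd (bigOr (L'.map ILForm.neg))) ∈ Γ :=
      mcs_rhd_trans hP hΓ hmem hprov
    exact hAss A L' hmemL' hrhd
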